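/- Let p, q ≥ 1, S(x) = Σ_{α=1}^p x_α² - Σ_{μ=p+1}^{p+q} x_μ², S₁(x) = Σ_{α=1}^p x_α², S₂(x) = Σ_{μ=p+1}^{p+q} x_μ², Δ the indefinite Laplacian Σ∂²_{x_α} - Σ∂²_{x_μ}. Let P₁ be a harmonic polynomial of degree k in x₁,…,x_p and P₂ a harmonic polynomial of degree m in x_{p+1},…,x_{p+q}. If α, β, γ ∈ ℝ satisfy (p+q)/2 + γ - 1 + 2α + 2β + k + m = 0, α(p/2 + α - 1 + k) = 0, and β(q/2 + β - 1 + m) = 0, then ψ := P₁ P₂ S₁^α S₂^β S^γ satisfies Δψ = 0 on the region where S₁ ≠ 0, S₂ ≠ 0, and S > 0. -/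

import Mathlib

open Real

/-- Partial derivative in the `j`-th coordinate direction. -/
noncomputable def pd {n : ℕ} (j : Fin n) (f : (Fin n → ℝ) → ℝ) : (Fin n → ℝ) → ℝ :=
  fun x => fderiv ℝ f x (Pi.single j 1)

/-- The indefinite Laplacian of signature `(p,q)`. -/
noncomputable def indefLap (p q : ℕ) (f : (Fin (p + q) → ℝ) → ℝ) : (Fin (p + q) → ℝ) → ℝ :=
  fun x => ∑ j : Fin (p + q), (if (j : ℕ) < p then (1 : ℝ) else -1) * pd j (pd j f) x

/-- `S(x) = Σ_{α≤p} x_α² - Σ_{μ>p} x_μ²`. -/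
noncomputable def qform (p q : ℕ) (x : Fin (p + q) → ℝ) : ℝ :=
  ∑ j : Fin (p + q), (if (j : ℕ) < p then (1 : ℝ) else -1) * x j ^ 2

/-- `S₁(x) = Σ_{α≤p} x_α²`. -/
noncomputable def qform1 (p q : ℕ) (x : Fin (p + q) → ℝ) : ℝ :=
  ∑ i : Fin p, x (Fin.castAdd q i) ^ 2

/-- `S₂(x) = Σ_{μ>p} x_μ²`. -/
noncomputable def qform2 (p q : ℕ) (x : Fin (p + q) → ℝ) : ℝ :=
  ∑ i : Fin q, x (Fin.natAdd p i) ^ 2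


open MvPolynomial

lemma hasFDerivAt_eval {n : ℕ} (Q : MvPolynomial (Fin n) ℝ) (u : Fin n → ℝ) :
    HasFDerivAt (fun v : Fin n → ℝ => MvPolynomial.eval v Q)
      (∑ i : Fin n, MvPolynomial.eval u (MvPolynomial.pderiv i Q) •
        (ContinuousLinearMap.proj i : (Fin n → ℝ) →L[ℝ] ℝ)) u := by
  induction Q using MvPolynomial.induction_on with
  | C a =>
      simp only [eval_C, pderiv_C, map_zero, zero_smul, Finset.sum_const_zero]
      exact hasFDerivAt_const a u
  | add P Q hP hQ =>
      have := hP.add hQ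
      simp only [eval_add] at this ⊢
      convert! this using 1
      simp [map_add, add_smul, Finset.sum_add_distrib]
  | mul_X P i hP =>
      have hXi : HasFDerivAt (fun v : Fin n → ℝ => v i)
          (ContinuousLinearMap.proj i : (Fin n → ℝ) →L[ℝ] ℝ) u :=
        hasFDerivAt_apply i u
      have := hP.mul hXi
      simp only [eval_mul, eval_X] at this ⊢
      convert! this using 1
      ext v
      simp only [ContinuousLinearMap.sum_apply, ContinuousLinearMap.smul_apply,
        ContinuousLinearMap.add_apply, ContinuousLinearMap.proj_apply, smul_eq_mul,
        pderiv_mul, pderiv_X, eval_add, eval_mul, eval_X, map_add]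
      simp only [add_mul, Finset.sum_add_distrib, Pi.single_apply, apply_ite (MvPolynomial.eval u),
        map_one, map_zero, ite_mul, one_mul, zero_mul, mul_ite, mul_zero, mul_one,
        Finset.sum_ite_eq, Finset.mem_univ, if_true]
      rw [add_comm]
      congr 1
      rw [Finset.mul_sum]
      exact Finset.sum_congr rfl fun x _ => by ring

lemma euler_monomial {n : ℕ} (d : Fin n →₀ ℕ) (c : ℝ) :
    ∑ i : Fin n, X i * pderiv i (monomial d c) = (∑ i : Fin n, d i) • monomial d c := by
  rw [Finset.sum_smul]
  refine Finset.sum_congr rfl fun i _ => ?_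
  rw [pderiv_monomial]
  rcases Nat.eq_zero_or_pos (d i) with h | h
  · simp [h]
  · have : X (R := ℝ) i * monomial (d - Finsupp.single i 1) (c * d i)
        = monomial (Finsupp.single i 1 + (d - Finsupp.single i 1)) (1 * (c * d i)) := by
      rw [X, monomial_mul]
    rw [this]
    have hd : Finsupp.single i 1 + (d - Finsupp.single i 1) = d := by
      ext a
      rcases eq_or_ne a i with rfl | ha
      · simp [Finsupp.single_apply]
        omega
      · simp [Finsupp.single_apply, ha.symm, Ne.symm ha]
    rw [hd, one_mul]
    rw [show c * (d i : ℝ) = (d i : ℝ) * c by ring, ← smul_eq_mul, ← map_nsmul]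
    simp [nsmul_eq_mul]

lemma euler {n k : ℕ} {Q : MvPolynomial (Fin n) ℝ} (h : Q.IsHomogeneous k) :
    ∑ i : Fin n, X i * pderiv i Q = k • Q := by
  have key : ∀ d ∈ Q.support, ∑ i : Fin n, X i * pderiv i (monomial d (coeff d Q))
      = k • monomial d (coeff d Q) := by
    intro d hd
    rw [euler_monomial]
    have hdeg : d.degree = k := by
      by_contra hne
      exact (Finsupp.mem_support_iff.mp hd) (h.coeff_eq_zero hne)
    have hsum : ∑ i : Fin n, d i = k := by
      rw [← hdeg, Finsupp.degree]
      exact (Finset.sum_subset (Finset.subset_univ _) (by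
        intro x _ hx
        simpa [Finsupp.mem_support_iff] using Finsupp.notMem_support_iff.mp hx)).symm
    rw [hsum]
  conv_lhs => rw [Q.as_sum]
  simp only [map_sum, Finset.mul_sum]
  rw [Finset.sum_comm, Finset.sum_congr rfl key, ← Finset.smul_sum, ← Q.as_sum]

noncomputable def dev1 (p q : ℕ) (Q : MvPolynomial (Fin p) ℝ) (y : Fin (p + q) → ℝ) :
    (Fin (p + q) → ℝ) →L[ℝ] ℝ :=
  ∑ i : Fin p, MvPolynomial.eval (fun i' => y (Fin.castAdd q i')) (pderiv i Q) •
    (ContinuousLinearMap.proj (Fin.castAdd q i))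

noncomputable def dev2 (p q : ℕ) (Q : MvPolynomial (Fin q) ℝ) (y : Fin (p + q) → ℝ) :
    (Fin (p + q) → ℝ) →L[ℝ] ℝ :=
  ∑ i : Fin q, MvPolynomial.eval (fun i' => y (Fin.natAdd p i')) (pderiv i Q) •
    (ContinuousLinearMap.proj (Fin.natAdd p i))

noncomputable def dq1 (p q : ℕ) (y : Fin (p + q) → ℝ) : (Fin (p + q) → ℝ) →L[ℝ] ℝ :=
  ∑ i : Fin p, (2 * y (Fin.castAdd q i)) • (ContinuousLinearMap.proj (Fin.castAdd q i))

noncomputable def dq2 (p q : ℕ) (y : Fin (p + q) → ℝ) : (Fin (p + q) → ℝ) →L[ℝ] ℝ :=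
  ∑ i : Fin q, (2 * y (Fin.natAdd p i)) • (ContinuousLinearMap.proj (Fin.natAdd p i))


lemma hasFDerivAt_ev1 (p q : ℕ) (Q : MvPolynomial (Fin p) ℝ) (y : Fin (p + q) → ℝ) :
    HasFDerivAt (fun y : Fin (p + q) → ℝ => MvPolynomial.eval (fun i => y (Fin.castAdd q i)) Q)
      (dev1 p q Q y) y := by
  set R : (Fin (p + q) → ℝ) →L[ℝ] (Fin p → ℝ) :=
    ContinuousLinearMap.pi (fun i : Fin p => ContinuousLinearMap.proj (Fin.castAdd q i)) with hR
  have h := (hasFDerivAt_eval Q (fun i => y (Fin.castAdd q i))).comp y (R.hasFDerivAt (x := y))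
  convert! h using 1
  ext v
  simp [dev1, hR, ContinuousLinearMap.sum_apply, ContinuousLinearMap.smul_apply]

lemma hasFDerivAt_ev2 (p q : ℕ) (Q : MvPolynomial (Fin q) ℝ) (y : Fin (p + q) → ℝ) :
    HasFDerivAt (fun y : Fin (p + q) → ℝ => MvPolynomial.eval (fun i => y (Fin.natAdd p i)) Q)
      (dev2 p q Q y) y := by
  set R : (Fin (p + q) → ℝ) →L[ℝ] (Fin q → ℝ) :=
    ContinuousLinearMap.pi (fun i : Fin q => ContinuousLinearMap.proj (Fin.natAdd p i)) with hR
  have h := (hasFDerivAt_eval Q (fun i => y (Fin.natAdd p i))).comp y (R.hasFDerivAt (x := y))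
  convert! h using 1
  ext v
  simp [dev2, hR, ContinuousLinearMap.sum_apply, ContinuousLinearMap.smul_apply]

lemma hasFDerivAt_q1 (p q : ℕ) (y : Fin (p + q) → ℝ) :
    HasFDerivAt (qform1 p q) (dq1 p q y) y := by
  have h : ∀ i ∈ Finset.univ, HasFDerivAt (fun y : Fin (p + q) → ℝ => y (Fin.castAdd q i) ^ 2)
      ((2 * y (Fin.castAdd q i)) • (ContinuousLinearMap.proj (Fin.castAdd q i) :
        (Fin (p + q) → ℝ) →L[ℝ] ℝ)) y := by
    intro i _
    have hj : HasFDerivAt (fun z : Fin (p + q) → ℝ => z (Fin.castAdd q i))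
        (ContinuousLinearMap.proj (Fin.castAdd q i) : (Fin (p + q) → ℝ) →L[ℝ] ℝ) y :=
      hasFDerivAt_apply (Fin.castAdd q i) y
    have h0 := hj.fun_mul hj
    convert! h0 using 1
    · funext z; exact pow_two _
    · ext v; simp [two_mul, add_smul, add_mul]
  exact HasFDerivAt.fun_sum h

lemma hasFDerivAt_q2 (p q : ℕ) (y : Fin (p + q) → ℝ) :
    HasFDerivAt (qform2 p q) (dq2 p q y) y := by
  have h : ∀ i ∈ Finset.univ, HasFDerivAt (fun y : Fin (p + q) → ℝ => y (Fin.natAdd p i) ^ 2)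
      ((2 * y (Fin.natAdd p i)) • (ContinuousLinearMap.proj (Fin.natAdd p i) :
        (Fin (p + q) → ℝ) →L[ℝ] ℝ)) y := by
    intro i _
    have hj : HasFDerivAt (fun z : Fin (p + q) → ℝ => z (Fin.natAdd p i))
        (ContinuousLinearMap.proj (Fin.natAdd p i) : (Fin (p + q) → ℝ) →L[ℝ] ℝ) y :=
      hasFDerivAt_apply (Fin.natAdd p i) y
    have h0 := hj.fun_mul hj
    convert! h0 using 1
    · funext z; exact pow_two _
    · ext v; simp [two_mul, add_smul, add_mul]
  exact HasFDerivAt.fun_sum h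

lemma qform_sub (p q : ℕ) (y : Fin (p + q) → ℝ) :
    qform p q y = qform1 p q y - qform2 p q y := by
  rw [qform, Fin.sum_univ_add]
  congr 1
  · refine Finset.sum_congr rfl fun i _ => ?_
    simp [Fin.is_lt]
  · rw [qform2, ← Finset.sum_neg_distrib]
    refine Finset.sum_congr rfl fun i _ => ?_
    simp

lemma hasFDerivAt_q (p q : ℕ) (y : Fin (p + q) → ℝ) :
    HasFDerivAt (qform p q) (dq1 p q y - dq2 p q y) y := by
  have h : qform p q = fun y => qform1 p q y - qform2 p q y := funext (qform_sub p q)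
  rw [h]
  exact (hasFDerivAt_q1 p q y).sub (hasFDerivAt_q2 p q y)

lemma castAdd_ne_natAdd (p q : ℕ) (i : Fin p) (i' : Fin q) :
    Fin.castAdd q i ≠ Fin.natAdd p i' := by
  simp only [Fin.ne_iff_vne, Fin.coe_castAdd, Fin.coe_natAdd]
  omega

lemma dev1_apply_cast (p q : ℕ) (Q : MvPolynomial (Fin p) ℝ) (y : Fin (p + q) → ℝ) (i0 : Fin p) :
    dev1 p q Q y (Pi.single (Fin.castAdd q i0) 1) =
      MvPolynomial.eval (fun i' => y (Fin.castAdd q i')) (pderiv i0 Q) := by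
  simp only [dev1, ContinuousLinearMap.sum_apply, ContinuousLinearMap.smul_apply,
    ContinuousLinearMap.proj_apply, smul_eq_mul]
  rw [Finset.sum_eq_single i0]
  · simp
  · intro j _ hj
    rw [Pi.single_eq_of_ne (fun h => hj (Fin.ext (by simpa using congrArg Fin.val h))) 1]
    ring
  · simp

lemma dev1_apply_nat (p q : ℕ) (Q : MvPolynomial (Fin p) ℝ) (y : Fin (p + q) → ℝ) (i' : Fin q) :
    dev1 p q Q y (Pi.single (Fin.natAdd p i') 1) = 0 := by
  simp only [dev1, ContinuousLinearMap.sum_apply, ContinuousLinearMap.smul_apply,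
    ContinuousLinearMap.proj_apply, smul_eq_mul]
  refine Finset.sum_eq_zero fun i _ => ?_
  rw [Pi.single_eq_of_ne (castAdd_ne_natAdd p q i i') 1]
  ring

lemma dev2_apply_cast (p q : ℕ) (Q : MvPolynomial (Fin q) ℝ) (y : Fin (p + q) → ℝ) (i0 : Fin p) :
    dev2 p q Q y (Pi.single (Fin.castAdd q i0) 1) = 0 := by
  simp only [dev2, ContinuousLinearMap.sum_apply, ContinuousLinearMap.smul_apply,
    ContinuousLinearMap.proj_apply, smul_eq_mul]
  refine Finset.sum_eq_zero fun i _ => ?_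
  rw [Pi.single_eq_of_ne (castAdd_ne_natAdd p q i0 i).symm 1]
  ring

lemma dev2_apply_nat (p q : ℕ) (Q : MvPolynomial (Fin q) ℝ) (y : Fin (p + q) → ℝ) (i0 : Fin q) :
    dev2 p q Q y (Pi.single (Fin.natAdd p i0) 1) =
      MvPolynomial.eval (fun i' => y (Fin.natAdd p i')) (pderiv i0 Q) := by
  simp only [dev2, ContinuousLinearMap.sum_apply, ContinuousLinearMap.smul_apply,
    ContinuousLinearMap.proj_apply, smul_eq_mul]
  rw [Finset.sum_eq_single i0]
  · simp
  · intro j _ hj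
    rw [Pi.single_eq_of_ne (fun h => hj (Fin.ext (by simpa using congrArg Fin.val h))) 1]
    ring
  · simp

lemma dq1_apply_cast (p q : ℕ) (y : Fin (p + q) → ℝ) (i0 : Fin p) :
    dq1 p q y (Pi.single (Fin.castAdd q i0) 1) = 2 * y (Fin.castAdd q i0) := by
  simp only [dq1, ContinuousLinearMap.sum_apply, ContinuousLinearMap.smul_apply,
    ContinuousLinearMap.proj_apply, smul_eq_mul]
  rw [Finset.sum_eq_single i0]
  · simp
  · intro j _ hj
    rw [Pi.single_eq_of_ne (fun h => hj (Fin.ext (by simpa using congrArg Fin.val h))) 1]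
    ring
  · simp

lemma dq1_apply_nat (p q : ℕ) (y : Fin (p + q) → ℝ) (i' : Fin q) :
    dq1 p q y (Pi.single (Fin.natAdd p i') 1) = 0 := by
  simp only [dq1, ContinuousLinearMap.sum_apply, ContinuousLinearMap.smul_apply,
    ContinuousLinearMap.proj_apply, smul_eq_mul]
  refine Finset.sum_eq_zero fun i _ => ?_
  rw [Pi.single_eq_of_ne (castAdd_ne_natAdd p q i i') 1]
  ring

lemma dq2_apply_cast (p q : ℕ) (y : Fin (p + q) → ℝ) (i0 : Fin p) :
    dq2 p q y (Pi.single (Fin.castAdd q i0) 1) = 0 := by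
  simp only [dq2, ContinuousLinearMap.sum_apply, ContinuousLinearMap.smul_apply,
    ContinuousLinearMap.proj_apply, smul_eq_mul]
  refine Finset.sum_eq_zero fun i _ => ?_
  rw [Pi.single_eq_of_ne (castAdd_ne_natAdd p q i0 i).symm 1]
  ring

lemma dq2_apply_nat (p q : ℕ) (y : Fin (p + q) → ℝ) (i0 : Fin q) :
    dq2 p q y (Pi.single (Fin.natAdd p i0) 1) = 2 * y (Fin.natAdd p i0) := by
  simp only [dq2, ContinuousLinearMap.sum_apply, ContinuousLinearMap.smul_apply,
    ContinuousLinearMap.proj_apply, smul_eq_mul]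
  rw [Finset.sum_eq_single i0]
  · simp
  · intro j _ hj
    rw [Pi.single_eq_of_ne (fun h => hj (Fin.ext (by simpa using congrArg Fin.val h))) 1]
    ring
  · simp

noncomputable def psi (p q : ℕ) (c : ℝ) (Q₁ : MvPolynomial (Fin p) ℝ)
    (Q₂ : MvPolynomial (Fin q) ℝ) (a b g : ℝ) : (Fin (p + q) → ℝ) → ℝ :=
  fun y => c * MvPolynomial.eval (fun i => y (Fin.castAdd q i)) Q₁ *
    MvPolynomial.eval (fun i => y (Fin.natAdd p i)) Q₂ *
    qform1 p q y ^ a * qform2 p q y ^ b * qform p q y ^ g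

noncomputable def dpsi (p q : ℕ) (c : ℝ) (Q₁ : MvPolynomial (Fin p) ℝ)
    (Q₂ : MvPolynomial (Fin q) ℝ) (a b g : ℝ) (y : Fin (p + q) → ℝ) :
    (Fin (p + q) → ℝ) →L[ℝ] ℝ :=
  (c * MvPolynomial.eval (fun i => y (Fin.natAdd p i)) Q₂ *
      qform1 p q y ^ a * qform2 p q y ^ b * qform p q y ^ g) • dev1 p q Q₁ y
  + (c * MvPolynomial.eval (fun i => y (Fin.castAdd q i)) Q₁ *
      qform1 p q y ^ a * qform2 p q y ^ b * qform p q y ^ g) • dev2 p q Q₂ y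
  + (c * MvPolynomial.eval (fun i => y (Fin.castAdd q i)) Q₁ *
      MvPolynomial.eval (fun i => y (Fin.natAdd p i)) Q₂ *
      (a * qform1 p q y ^ (a - 1)) * qform2 p q y ^ b * qform p q y ^ g) • dq1 p q y
  + (c * MvPolynomial.eval (fun i => y (Fin.castAdd q i)) Q₁ *
      MvPolynomial.eval (fun i => y (Fin.natAdd p i)) Q₂ *
      qform1 p q y ^ a * (b * qform2 p q y ^ (b - 1)) * qform p q y ^ g) • dq2 p q y
  + (c * MvPolynomial.eval (fun i => y (Fin.castAdd q i)) Q₁ *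
      MvPolynomial.eval (fun i => y (Fin.natAdd p i)) Q₂ *
      qform1 p q y ^ a * qform2 p q y ^ b * (g * qform p q y ^ (g - 1))) •
        (dq1 p q y - dq2 p q y)

lemma hasFDerivAt_psi (p q : ℕ) (c : ℝ) (Q₁ : MvPolynomial (Fin p) ℝ)
    (Q₂ : MvPolynomial (Fin q) ℝ) (a b g : ℝ) (y : Fin (p + q) → ℝ)
    (hA : qform1 p q y ≠ 0) (hB : qform2 p q y ≠ 0) (hC : qform p q y ≠ 0) :
    HasFDerivAt (psi p q c Q₁ Q₂ a b g) (dpsi p q c Q₁ Q₂ a b g y) y := by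
  have h1 := (hasFDerivAt_ev1 p q Q₁ y).const_mul c
  have h2 := h1.fun_mul (hasFDerivAt_ev2 p q Q₂ y)
  have h3 := h2.fun_mul ((hasFDerivAt_q1 p q y).rpow_const (p := a) (Or.inl hA))
  have h4 := h3.fun_mul ((hasFDerivAt_q2 p q y).rpow_const (p := b) (Or.inl hB))
  have h5 := h4.fun_mul ((hasFDerivAt_q p q y).rpow_const (p := g) (Or.inl hC))
  convert! h5 using 1
  ext v
  simp only [dpsi, ContinuousLinearMap.add_apply, ContinuousLinearMap.smul_apply,
    ContinuousLinearMap.sub_apply, ContinuousLinearMap.coe_smul', Pi.smul_apply, smul_eq_mul]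
  ring

lemma dpsi_apply_cast (p q : ℕ) (c : ℝ) (Q₁ : MvPolynomial (Fin p) ℝ)
    (Q₂ : MvPolynomial (Fin q) ℝ) (a b g : ℝ) (y : Fin (p + q) → ℝ) (i0 : Fin p) :
    dpsi p q c Q₁ Q₂ a b g y (Pi.single (Fin.castAdd q i0) 1) =
      psi p q c (pderiv i0 Q₁) Q₂ a b g y
      + psi p q (2 * a * c) (X i0 * Q₁) Q₂ (a - 1) b g y
      + psi p q (2 * g * c) (X i0 * Q₁) Q₂ a b (g - 1) y := by
  simp only [dpsi, psi, ContinuousLinearMap.add_apply, ContinuousLinearMap.smul_apply,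
    ContinuousLinearMap.sub_apply, smul_eq_mul, dev1_apply_cast, dev2_apply_cast,
    dq1_apply_cast, dq2_apply_cast, eval_mul, eval_X]
  ring

lemma dpsi_apply_nat (p q : ℕ) (c : ℝ) (Q₁ : MvPolynomial (Fin p) ℝ)
    (Q₂ : MvPolynomial (Fin q) ℝ) (a b g : ℝ) (y : Fin (p + q) → ℝ) (i0 : Fin q) :
    dpsi p q c Q₁ Q₂ a b g y (Pi.single (Fin.natAdd p i0) 1) =
      psi p q c Q₁ (pderiv i0 Q₂) a b g y
      + psi p q (2 * b * c) Q₁ (X i0 * Q₂) a (b - 1) g y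
      + psi p q (-(2 * g * c)) Q₁ (X i0 * Q₂) a b (g - 1) y := by
  simp only [dpsi, psi, ContinuousLinearMap.add_apply, ContinuousLinearMap.smul_apply,
    ContinuousLinearMap.sub_apply, smul_eq_mul, dev1_apply_nat, dev2_apply_nat,
    dq1_apply_nat, dq2_apply_nat, eval_mul, eval_X]
  ring

lemma psi_pd (p q : ℕ) (c : ℝ) (Q₁ : MvPolynomial (Fin p) ℝ)
    (Q₂ : MvPolynomial (Fin q) ℝ) (a b g : ℝ) (y : Fin (p + q) → ℝ)
    (hA : qform1 p q y ≠ 0) (hB : qform2 p q y ≠ 0) (hC : qform p q y ≠ 0)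
    (j : Fin (p + q)) :
    pd j (psi p q c Q₁ Q₂ a b g) y = dpsi p q c Q₁ Q₂ a b g y (Pi.single j 1) := by
  rw [pd, (hasFDerivAt_psi p q c Q₁ Q₂ a b g y hA hB hC).fderiv]

lemma continuous_q1 (p q : ℕ) : Continuous (qform1 p q) := by
  unfold qform1
  exact continuous_finset_sum _ fun i _ => (continuous_apply _).pow 2

lemma continuous_q2 (p q : ℕ) : Continuous (qform2 p q) := by
  unfold qform2
  exact continuous_finset_sum _ fun i _ => (continuous_apply _).pow 2

lemma continuous_q (p q : ℕ) : Continuous (qform p q) := by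
  have h : qform p q = fun y => qform1 p q y - qform2 p q y := funext (qform_sub p q)
  rw [h]
  exact (continuous_q1 p q).sub (continuous_q2 p q)

def Upos (p q : ℕ) : Set (Fin (p + q) → ℝ) :=
  {y | qform1 p q y ≠ 0 ∧ qform2 p q y ≠ 0 ∧ qform p q y ≠ 0}

lemma isOpen_Upos (p q : ℕ) : IsOpen (Upos p q) := by
  have h1 : IsOpen {y | qform1 p q y ≠ 0} :=
    isOpen_compl_singleton.preimage (continuous_q1 p q)
  have h2 : IsOpen {y | qform2 p q y ≠ 0} :=
    isOpen_compl_singleton.preimage (continuous_q2 p q)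
  have h3 : IsOpen {y | qform p q y ≠ 0} :=
    isOpen_compl_singleton.preimage (continuous_q p q)
  exact (h1.inter (h2.inter h3))

lemma psi_pd2_cast (p q : ℕ) (c : ℝ) (Q₁ : MvPolynomial (Fin p) ℝ)
    (Q₂ : MvPolynomial (Fin q) ℝ) (a b g : ℝ) (x : Fin (p + q) → ℝ)
    (hx : x ∈ Upos p q) (i0 : Fin p) :
    pd (Fin.castAdd q i0) (pd (Fin.castAdd q i0) (psi p q c Q₁ Q₂ a b g)) x =
      psi p q c (pderiv i0 (pderiv i0 Q₁)) Q₂ a b g x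
      + psi p q (2 * a * c) (X i0 * pderiv i0 Q₁) Q₂ (a - 1) b g x
      + psi p q (2 * g * c) (X i0 * pderiv i0 Q₁) Q₂ a b (g - 1) x
      + (psi p q (2 * a * c) (pderiv i0 (X i0 * Q₁)) Q₂ (a - 1) b g x
        + psi p q (2 * (a - 1) * (2 * a * c)) (X i0 * (X i0 * Q₁)) Q₂ (a - 2) b g x
        + psi p q (2 * g * (2 * a * c)) (X i0 * (X i0 * Q₁)) Q₂ (a - 1) b (g - 1) x)
      + (psi p q (2 * g * c) (pderiv i0 (X i0 * Q₁)) Q₂ a b (g - 1) x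
        + psi p q (2 * a * (2 * g * c)) (X i0 * (X i0 * Q₁)) Q₂ (a - 1) b (g - 1) x
        + psi p q (2 * (g - 1) * (2 * g * c)) (X i0 * (X i0 * Q₁)) Q₂ a b (g - 2) x) := by
  obtain ⟨hA, hB, hC⟩ := hx
  have hev : pd (Fin.castAdd q i0) (psi p q c Q₁ Q₂ a b g) =ᶠ[nhds x]
      (fun z => psi p q c (pderiv i0 Q₁) Q₂ a b g z
        + psi p q (2 * a * c) (X i0 * Q₁) Q₂ (a - 1) b g z
        + psi p q (2 * g * c) (X i0 * Q₁) Q₂ a b (g - 1) z) := by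
    refine Filter.eventuallyEq_of_mem ((isOpen_Upos p q).mem_nhds ⟨hA, hB, hC⟩) ?_
    intro z hz
    rw [psi_pd p q c Q₁ Q₂ a b g z hz.1 hz.2.1 hz.2.2, dpsi_apply_cast]
  show fderiv ℝ (pd (Fin.castAdd q i0) (psi p q c Q₁ Q₂ a b g)) x _ = _
  rw [hev.fderiv_eq]
  have hG := ((hasFDerivAt_psi p q c (pderiv i0 Q₁) Q₂ a b g x hA hB hC).fun_add
      (hasFDerivAt_psi p q (2 * a * c) (X i0 * Q₁) Q₂ (a - 1) b g x hA hB hC)).fun_add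
      (hasFDerivAt_psi p q (2 * g * c) (X i0 * Q₁) Q₂ a b (g - 1) x hA hB hC)
  rw [hG.fderiv]
  simp only [ContinuousLinearMap.add_apply]
  rw [dpsi_apply_cast, dpsi_apply_cast, dpsi_apply_cast]
  ring

lemma psi_pd2_nat (p q : ℕ) (c : ℝ) (Q₁ : MvPolynomial (Fin p) ℝ)
    (Q₂ : MvPolynomial (Fin q) ℝ) (a b g : ℝ) (x : Fin (p + q) → ℝ)
    (hx : x ∈ Upos p q) (i0 : Fin q) :
    pd (Fin.natAdd p i0) (pd (Fin.natAdd p i0) (psi p q c Q₁ Q₂ a b g)) x =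
      psi p q c Q₁ (pderiv i0 (pderiv i0 Q₂)) a b g x
      + psi p q (2 * b * c) Q₁ (X i0 * pderiv i0 Q₂) a (b - 1) g x
      + psi p q (-(2 * g * c)) Q₁ (X i0 * pderiv i0 Q₂) a b (g - 1) x
      + (psi p q (2 * b * c) Q₁ (pderiv i0 (X i0 * Q₂)) a (b - 1) g x
        + psi p q (2 * (b - 1) * (2 * b * c)) Q₁ (X i0 * (X i0 * Q₂)) a (b - 2) g x
        + psi p q (-(2 * g * (2 * b * c))) Q₁ (X i0 * (X i0 * Q₂)) a (b - 1) (g - 1) x)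
      + (psi p q (-(2 * g * c)) Q₁ (pderiv i0 (X i0 * Q₂)) a b (g - 1) x
        + psi p q (2 * b * (-(2 * g * c))) Q₁ (X i0 * (X i0 * Q₂)) a (b - 1) (g - 1) x
        + psi p q (-(2 * (g - 1) * (-(2 * g * c)))) Q₁ (X i0 * (X i0 * Q₂)) a b (g - 2) x) := by
  obtain ⟨hA, hB, hC⟩ := hx
  have hev : pd (Fin.natAdd p i0) (psi p q c Q₁ Q₂ a b g) =ᶠ[nhds x]
      (fun z => psi p q c Q₁ (pderiv i0 Q₂) a b g z
        + psi p q (2 * b * c) Q₁ (X i0 * Q₂) a (b - 1) g z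
        + psi p q (-(2 * g * c)) Q₁ (X i0 * Q₂) a b (g - 1) z) := by
    refine Filter.eventuallyEq_of_mem ((isOpen_Upos p q).mem_nhds ⟨hA, hB, hC⟩) ?_
    intro z hz
    rw [psi_pd p q c Q₁ Q₂ a b g z hz.1 hz.2.1 hz.2.2, dpsi_apply_nat]
  show fderiv ℝ (pd (Fin.natAdd p i0) (psi p q c Q₁ Q₂ a b g)) x _ = _
  rw [hev.fderiv_eq]
  have hG := ((hasFDerivAt_psi p q c Q₁ (pderiv i0 Q₂) a b g x hA hB hC).fun_add
      (hasFDerivAt_psi p q (2 * b * c) Q₁ (X i0 * Q₂) a (b - 1) g x hA hB hC)).fun_add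
      (hasFDerivAt_psi p q (-(2 * g * c)) Q₁ (X i0 * Q₂) a b (g - 1) x hA hB hC)
  rw [hG.fderiv]
  simp only [ContinuousLinearMap.add_apply]
  rw [dpsi_apply_nat, dpsi_apply_nat, dpsi_apply_nat]
  ring


lemma sum_psi_left (p q : ℕ) (c : ℝ) (F : Fin p → MvPolynomial (Fin p) ℝ)
    (Q₂ : MvPolynomial (Fin q) ℝ) (a b g : ℝ) (x : Fin (p + q) → ℝ) :
    ∑ i : Fin p, psi p q c (F i) Q₂ a b g x = psi p q c (∑ i : Fin p, F i) Q₂ a b g x := by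
  simp only [psi, map_sum, Finset.mul_sum, Finset.sum_mul]

lemma sum_psi_right (p q : ℕ) (c : ℝ) (Q₁ : MvPolynomial (Fin p) ℝ)
    (F : Fin q → MvPolynomial (Fin q) ℝ) (a b g : ℝ) (x : Fin (p + q) → ℝ) :
    ∑ i : Fin q, psi p q c Q₁ (F i) a b g x = psi p q c Q₁ (∑ i : Fin q, F i) a b g x := by
  simp only [psi, map_sum, Finset.mul_sum, Finset.sum_mul]

lemma sum_pderiv_X_mul {n : ℕ} (Q : MvPolynomial (Fin n) ℝ) :
    ∑ i : Fin n, pderiv i (X i * Q) = n • Q + ∑ i : Fin n, X i * pderiv i Q := by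
  have h : ∀ i : Fin n, pderiv i (X i * Q) = Q + X i * pderiv i Q := by
    intro i
    rw [pderiv_mul, pderiv_X_self, one_mul]
  rw [Finset.sum_congr rfl fun i _ => h i, Finset.sum_add_distrib, Finset.sum_const,
    Finset.card_univ, Fintype.card_fin]

lemma sum_X_mul_X_mul {n : ℕ} (Q : MvPolynomial (Fin n) ℝ) :
    ∑ i : Fin n, X i * (X i * Q) = (∑ i : Fin n, X i * X i) * Q := by
  rw [Finset.sum_mul]
  exact Finset.sum_congr rfl fun i _ => (mul_assoc _ _ _).symm

lemma ev1_sumXX (p q : ℕ) (x : Fin (p + q) → ℝ) :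
    MvPolynomial.eval (fun i => x (Fin.castAdd q i)) (∑ i : Fin p, (X i : MvPolynomial (Fin p) ℝ) * X i)
      = qform1 p q x := by
  simp [qform1, pow_two]

lemma ev2_sumXX (p q : ℕ) (x : Fin (p + q) → ℝ) :
    MvPolynomial.eval (fun i => x (Fin.natAdd p i)) (∑ i : Fin q, (X i : MvPolynomial (Fin q) ℝ) * X i)
      = qform2 p q x := by
  simp [qform2, pow_two]

/-- Rallis–Schiffmann harmonicity: under the three algebraic conditions on `α, β, γ`,
the function `ψ = P₁ P₂ S₁^α S₂^β S^γ` is annihilated by the indefinite Laplacian on the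
region `S₁ ≠ 0`, `S₂ ≠ 0`, `S > 0`. -/
theorem rallis_schiffmann_harmonic (p q k m : ℕ) (hp : 1 ≤ p) (hq : 1 ≤ q)
    (P₁ : MvPolynomial (Fin p) ℝ) (P₂ : MvPolynomial (Fin q) ℝ)
    (hP₁hom : P₁.IsHomogeneous k) (hP₂hom : P₂.IsHomogeneous m)
    (hP₁harm : ∑ i : Fin p, MvPolynomial.pderiv i (MvPolynomial.pderiv i P₁) = 0)
    (hP₂harm : ∑ i : Fin q, MvPolynomial.pderiv i (MvPolynomial.pderiv i P₂) = 0)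
    (α β γ : ℝ)
    (h1 : (p + q : ℝ) / 2 + γ - 1 + 2 * α + 2 * β + k + m = 0)
    (h2 : α * ((p : ℝ) / 2 + α - 1 + k) = 0)
    (h3 : β * ((q : ℝ) / 2 + β - 1 + m) = 0) :
    ∀ x : Fin (p + q) → ℝ, qform1 p q x ≠ 0 → qform2 p q x ≠ 0 → 0 < qform p q x →
      indefLap p q (fun y =>
        MvPolynomial.eval (fun i => y (Fin.castAdd q i)) P₁ *
        MvPolynomial.eval (fun i => y (Fin.natAdd p i)) P₂ *
        qform1 p q y ^ α * qform2 p q y ^ β * qform p q y ^ γ) x = 0 := by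
  intro x hx1 hx2 hxpos
  have hC : qform p q x ≠ 0 := ne_of_gt hxpos
  have hx : x ∈ Upos p q := ⟨hx1, hx2, hC⟩
  have hfun : (fun y => MvPolynomial.eval (fun i => y (Fin.castAdd q i)) P₁ *
      MvPolynomial.eval (fun i => y (Fin.natAdd p i)) P₂ *
      qform1 p q y ^ α * qform2 p q y ^ β * qform p q y ^ γ) = psi p q 1 P₁ P₂ α β γ := by
    funext y
    simp [psi]
  rw [hfun]
  simp only [indefLap]
  rw [Fin.sum_univ_add]
  have E0 : ∀ c a b g : ℝ,
      ∑ i : Fin p, psi p q c (pderiv i (pderiv i P₁)) P₂ a b g x = 0 := by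
    intro c a b g
    rw [sum_psi_left, hP₁harm]
    simp [psi]
  have E1 : ∀ c a b g : ℝ, ∑ i : Fin p, psi p q c (X i * pderiv i P₁) P₂ a b g x
      = (k : ℝ) * psi p q c P₁ P₂ a b g x := by
    intro c a b g
    rw [sum_psi_left, euler hP₁hom]
    simp only [psi, map_nsmul, nsmul_eq_mul, map_mul, map_natCast]
    ring
  have E2 : ∀ c a b g : ℝ, ∑ i : Fin p, psi p q c (pderiv i (X i * P₁)) P₂ a b g x
      = ((p : ℝ) + k) * psi p q c P₁ P₂ a b g x := by
    intro c a b g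
    rw [sum_psi_left, sum_pderiv_X_mul, euler hP₁hom]
    simp only [psi, map_add, map_nsmul, nsmul_eq_mul, map_mul, map_natCast]
    ring
  have E3 : ∀ c a b g : ℝ, ∑ i : Fin p, psi p q c (X i * (X i * P₁)) P₂ a b g x
      = qform1 p q x * psi p q c P₁ P₂ a b g x := by
    intro c a b g
    rw [sum_psi_left, sum_X_mul_X_mul]
    simp only [psi, eval_mul, ev1_sumXX]
    ring
  have F0 : ∀ c a b g : ℝ,
      ∑ i : Fin q, psi p q c P₁ (pderiv i (pderiv i P₂)) a b g x = 0 := by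
    intro c a b g
    rw [sum_psi_right, hP₂harm]
    simp [psi]
  have F1 : ∀ c a b g : ℝ, ∑ i : Fin q, psi p q c P₁ (X i * pderiv i P₂) a b g x
      = (m : ℝ) * psi p q c P₁ P₂ a b g x := by
    intro c a b g
    rw [sum_psi_right, euler hP₂hom]
    simp only [psi, map_nsmul, nsmul_eq_mul, map_mul, map_natCast]
    ring
  have F2 : ∀ c a b g : ℝ, ∑ i : Fin q, psi p q c P₁ (pderiv i (X i * P₂)) a b g x
      = ((q : ℝ) + m) * psi p q c P₁ P₂ a b g x := by
    intro c a b g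
    rw [sum_psi_right, sum_pderiv_X_mul, euler hP₂hom]
    simp only [psi, map_add, map_nsmul, nsmul_eq_mul, map_mul, map_natCast]
    ring
  have F3 : ∀ c a b g : ℝ, ∑ i : Fin q, psi p q c P₁ (X i * (X i * P₂)) a b g x
      = qform2 p q x * psi p q c P₁ P₂ a b g x := by
    intro c a b g
    rw [sum_psi_right, sum_X_mul_X_mul]
    simp only [psi, eval_mul, ev2_sumXX]
    ring
  have hc1 : ∀ i : Fin p,
      (if ((Fin.castAdd q i : Fin (p + q)) : ℕ) < p then (1 : ℝ) else -1) = 1 :=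
    fun i => if_pos (by simp [Fin.is_lt])
  have hc2 : ∀ i : Fin q,
      (if ((Fin.natAdd p i : Fin (p + q)) : ℕ) < p then (1 : ℝ) else -1) = -1 :=
    fun i => if_neg (by simp)
  simp only [hc1, hc2, one_mul, neg_one_mul]
  simp only [psi_pd2_cast p q 1 P₁ P₂ α β γ x hx, psi_pd2_nat p q 1 P₁ P₂ α β γ x hx]
  simp only [Finset.sum_add_distrib, Finset.sum_neg_distrib]
  rw [E0 1 α β γ, E1 (2 * α * 1) (α - 1) β γ, E1 (2 * γ * 1) α β (γ - 1),
    E2 (2 * α * 1) (α - 1) β γ, E3 (2 * (α - 1) * (2 * α * 1)) (α - 2) β γ,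
    E3 (2 * γ * (2 * α * 1)) (α - 1) β (γ - 1),
    E2 (2 * γ * 1) α β (γ - 1), E3 (2 * α * (2 * γ * 1)) (α - 1) β (γ - 1),
    E3 (2 * (γ - 1) * (2 * γ * 1)) α β (γ - 2),
    F0 1 α β γ, F1 (2 * β * 1) α (β - 1) γ, F1 (-(2 * γ * 1)) α β (γ - 1),
    F2 (2 * β * 1) α (β - 1) γ, F3 (2 * (β - 1) * (2 * β * 1)) α (β - 2) γ,
    F3 (-(2 * γ * (2 * β * 1))) α (β - 1) (γ - 1),
    F2 (-(2 * γ * 1)) α β (γ - 1), F3 (2 * β * (-(2 * γ * 1))) α (β - 1) (γ - 1),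
    F3 (-(2 * (γ - 1) * (-(2 * γ * 1)))) α β (γ - 2)]
  simp only [psi]
  have r1 : qform1 p q x ^ α = qform1 p q x ^ (α - 1) * qform1 p q x := by
    rw [← Real.rpow_add_one hx1, sub_add_cancel]
  have r2 : qform1 p q x ^ (α - 1) = qform1 p q x ^ (α - 2) * qform1 p q x := by
    rw [← Real.rpow_add_one hx1, show α - 2 + 1 = α - 1 by ring]
  have r3 : qform2 p q x ^ β = qform2 p q x ^ (β - 1) * qform2 p q x := by
    rw [← Real.rpow_add_one hx2, sub_add_cancel]
  have r4 : qform2 p q x ^ (β - 1) = qform2 p q x ^ (β - 2) * qform2 p q x := by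
    rw [← Real.rpow_add_one hx2, show β - 2 + 1 = β - 1 by ring]
  have r5 : qform p q x ^ γ = qform p q x ^ (γ - 1) * qform p q x := by
    rw [← Real.rpow_add_one hC, sub_add_cancel]
  have r6 : qform p q x ^ (γ - 1) = qform p q x ^ (γ - 2) * qform p q x := by
    rw [← Real.rpow_add_one hC, show γ - 2 + 1 = γ - 1 by ring]
  rw [r1, r2, r3, r4, r5, r6, qform_sub p q x]
  set A := MvPolynomial.eval (fun i => x (Fin.castAdd q i)) P₁ with hA
  set B := MvPolynomial.eval (fun i => x (Fin.natAdd p i)) P₂ with hB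
  set s1 := qform1 p q x with hs1
  set s2 := qform2 p q x with hs2
  set u1 := s1 ^ (α - 2) with hu1
  set u2 := s2 ^ (β - 2) with hu2
  set u3 := (s1 - s2) ^ (γ - 2) with hu3
  linear_combination (4 * A * B * (u1 * s1) * (u2 * s2 ^ 2) * (u3 * (s1 - s2) ^ 2)) * h2
    - (4 * A * B * (u1 * s1 ^ 2) * (u2 * s2) * (u3 * (s1 - s2) ^ 2)) * h3
    + (4 * γ * A * B * (u1 * s1 ^ 2) * (u2 * s2 ^ 2) * (u3 * (s1 - s2))) * h1
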